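/- Let 1 < p < ∞ and let (û_i) be a sequence in L^p(μ) converging weakly to 0. Then there is a subsequence (û_{i_r}) such that the arithmetic means (1/k) Σ_{r=1}^k û_{i_r} converge to 0 in the L^p norm as k → ∞. -/

import Mathlib

open Real MeasureTheory Filter Topology Finset
open scoped NNReal ENNReal

namespace BS

variable {X : Type*} [MeasurableSpace X] {μ : Measure X} {p q : ℝ}

/-- subadditivity of rpow for exponent ≤ 1 -/
lemma rpow_add_le {a b s : ℝ} (ha : 0 ≤ a) (hb : 0 ≤ b) (hs0 : 0 ≤ s) (hs1 : s ≤ 1) :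
    (a + b) ^ s ≤ a ^ s + b ^ s := by
  have h := NNReal.rpow_add_le_add_rpow a.toNNReal b.toNNReal hs0 hs1
  have h2 : ((a.toNNReal + b.toNNReal : ℝ≥0) : ℝ) = a + b := by
    simp [Real.coe_toNNReal a ha, Real.coe_toNNReal b hb]
  calc (a + b) ^ s = (((a.toNNReal + b.toNNReal : ℝ≥0) : ℝ)) ^ s := by rw [h2]
    _ = (((a.toNNReal + b.toNNReal : ℝ≥0) ^ s : ℝ≥0) : ℝ) := by
        rw [NNReal.coe_rpow]
    _ ≤ ((a.toNNReal ^ s + b.toNNReal ^ s : ℝ≥0) : ℝ) := by exact_mod_cast h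
    _ = a ^ s + b ^ s := by
        push_cast [NNReal.coe_rpow, Real.coe_toNNReal a ha, Real.coe_toNNReal b hb]
        ring

lemma add_rpow_le_two_rpow_mul {x y t : ℝ} (hx : 0 ≤ x) (hy : 0 ≤ y) (ht : 0 ≤ t) :
    (x + y) ^ t ≤ 2 ^ t * (x ^ t + y ^ t) := by
  have h1 : x + y ≤ 2 * max x y := by
    rcases le_total x y with h | h
    · simp [max_eq_right h]; linarith
    · simp [max_eq_left h]; linarith
  have hm : 0 ≤ max x y := le_max_of_le_left hx
  calc (x + y) ^ t ≤ (2 * max x y) ^ t :=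
        Real.rpow_le_rpow (by linarith) h1 ht
    _ = 2 ^ t * (max x y) ^ t := Real.mul_rpow (by norm_num) hm
    _ ≤ 2 ^ t * (x ^ t + y ^ t) := by
        apply mul_le_mul_of_nonneg_left _ (Real.rpow_nonneg (by norm_num) t)
        rcases le_total x y with h | h
        · rw [max_eq_right h]
          have := Real.rpow_nonneg hx t
          linarith
        · rw [max_eq_left h]
          have := Real.rpow_nonneg hy t
          linarith

/-- the function `x ↦ x * |x| ^ (s - 1)` (i.e. `sign x * |x| ^ s`). -/
noncomputable def psi (s x : ℝ) : ℝ := x * |x| ^ (s - 1)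

lemma psi_zero (s : ℝ) : psi s 0 = 0 := by simp [psi]

lemma psi_of_nonneg {s x : ℝ} (hs : 0 < s) (hx : 0 ≤ x) : psi s x = x ^ s := by
  rcases eq_or_lt_of_le hx with h | h
  · simp [psi, ← h, Real.zero_rpow (ne_of_gt hs)]
  · rw [psi, abs_of_pos h]
    nth_rewrite 1 [show x = x ^ (1:ℝ) by rw [Real.rpow_one]]
    rw [← Real.rpow_add h]
    ring_nf

lemma psi_of_nonpos {s x : ℝ} (hs : 0 < s) (hx : x ≤ 0) : psi s x = -((-x) ^ s) := by
  have h1 : psi s (-x) = (-x) ^ s := psi_of_nonneg hs (by linarith)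
  have h2 : psi s (-x) = -psi s x := by simp [psi]
  linarith

lemma abs_psi {s x : ℝ} (hs : 0 < s) : |psi s x| = |x| ^ s := by
  rcases le_total 0 x with h | h
  · rw [psi_of_nonneg hs h, abs_of_nonneg h, abs_of_nonneg (Real.rpow_nonneg h s)]
  · rw [psi_of_nonpos hs h, abs_neg, abs_of_nonneg (Real.rpow_nonneg (by linarith) s),
      abs_of_nonpos h]

/-- Hölder continuity of `psi s` for `0 < s ≤ 1`. -/
lemma psi_holder {s : ℝ} (hs0 : 0 < s) (hs1 : s ≤ 1) (x y : ℝ) :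
    |psi s x - psi s y| ≤ 2 * |x - y| ^ s := by
  have key : ∀ a b : ℝ, 0 ≤ a → 0 ≤ b → b ≤ a → a ^ s - b ^ s ≤ (a - b) ^ s := by
    intro a b ha hb hba
    have := rpow_add_le (a := b) (b := a - b) hb (by linarith) hs0.le hs1
    simp only [add_sub_cancel] at this
    linarith
  have key2 : ∀ a b : ℝ, 0 ≤ a → 0 ≤ b → |a ^ s - b ^ s| ≤ |a - b| ^ s := by
    intro a b ha hb
    rcases le_total b a with h | h
    · rw [abs_of_nonneg (by nlinarith [Real.rpow_le_rpow hb h hs0.le] : (0:ℝ) ≤ a ^ s - b ^ s),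
        abs_of_nonneg (by linarith)]
      exact key a b ha hb h
    · rw [abs_sub_comm, abs_sub_comm a b,
        abs_of_nonneg (by nlinarith [Real.rpow_le_rpow ha h hs0.le] : (0:ℝ) ≤ b ^ s - a ^ s),
        abs_of_nonneg (by linarith)]
      exact key b a hb ha h
  have habs : ∀ z : ℝ, 0 ≤ z → z ^ s ≤ |z| ^ s := fun z hz => by rw [abs_of_nonneg hz]
  rcases le_total 0 x with hx | hx <;> rcases le_total 0 y with hy | hy
  · rw [psi_of_nonneg hs0 hx, psi_of_nonneg hs0 hy]
    calc |x ^ s - y ^ s| ≤ |x - y| ^ s := key2 x y hx hy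
      _ ≤ 2 * |x - y| ^ s := by nlinarith [Real.rpow_nonneg (abs_nonneg (x - y)) s]
  · -- x ≥ 0 ≥ y
    rw [psi_of_nonneg hs0 hx, psi_of_nonpos hs0 hy]
    have h1 : 0 ≤ x ^ s := Real.rpow_nonneg hx s
    have h2 : 0 ≤ (-y) ^ s := Real.rpow_nonneg (by linarith) s
    have hxy : 0 ≤ x - y := by linarith
    have e1 : x ^ s ≤ (x - y) ^ s := Real.rpow_le_rpow hx (by linarith) hs0.le
    have e2 : (-y) ^ s ≤ (x - y) ^ s := Real.rpow_le_rpow (by linarith) (by linarith) hs0.le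
    rw [abs_of_nonneg (by linarith : (0:ℝ) ≤ x ^ s - -((-y) ^ s))]
    rw [abs_of_nonneg hxy]
    linarith
  · -- x ≤ 0 ≤ y
    rw [psi_of_nonpos hs0 hx, psi_of_nonneg hs0 hy]
    have h1 : 0 ≤ y ^ s := Real.rpow_nonneg hy s
    have h2 : 0 ≤ (-x) ^ s := Real.rpow_nonneg (by linarith) s
    have hxy : 0 ≤ y - x := by linarith
    have e1 : y ^ s ≤ (y - x) ^ s := Real.rpow_le_rpow hy (by linarith) hs0.le
    have e2 : (-x) ^ s ≤ (y - x) ^ s := Real.rpow_le_rpow (by linarith) (by linarith) hs0.le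
    rw [abs_sub_comm, abs_of_nonneg (by linarith : (0:ℝ) ≤ y ^ s - -((-x) ^ s)), abs_sub_comm,
      abs_of_nonneg hxy]
    linarith
  · rw [psi_of_nonpos hs0 hx, psi_of_nonpos hs0 hy]
    have : -((-x) ^ s) - -((-y) ^ s) = (-y) ^ s - (-x) ^ s := by ring
    rw [this]
    calc |(-y) ^ s - (-x) ^ s| ≤ |(-y) - (-x)| ^ s := key2 _ _ (by linarith) (by linarith)
      _ = |x - y| ^ s := by rw [show -y - -x = x - y by ring]
      _ ≤ 2 * |x - y| ^ s := by nlinarith [Real.rpow_nonneg (abs_nonneg (x - y)) s]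

lemma tendsto_abs_rpow {t : ℝ} (ht : 0 < t) :
    Tendsto (fun y : ℝ => |y| ^ t) (𝓝[≠] (0:ℝ)) (𝓝 0) := by
  have habs : ContinuousAt (fun y : ℝ => |y|) (0:ℝ) := continuous_abs.continuousAt
  have h : ContinuousAt (fun y : ℝ => |y| ^ t) 0 := by
    have h1 := Real.continuousAt_rpow_const (|(0:ℝ)|) t (Or.inr ht.le)
    exact h1.comp habs
  have h2 : Tendsto (fun y : ℝ => |y| ^ t) (𝓝 0) (𝓝 0) := by
    simpa [Real.zero_rpow (ne_of_gt ht)] using h.tendsto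
  exact h2.mono_left nhdsWithin_le_nhds

lemma slope_zero_bound {f : ℝ → ℝ} {e : ℝ} (he : 1 < e) (hf0 : f 0 = 0)
    (hf : ∀ y, |f y| ≤ |y| ^ e) :
    ∀ᶠ y in 𝓝[≠] (0:ℝ), ‖slope f 0 y‖ ≤ |y| ^ (e - 1) := by
  filter_upwards [self_mem_nhdsWithin] with y (hy : y ≠ 0)
  have hay : 0 < |y| := abs_pos.2 hy
  rw [slope_def_field, hf0, sub_zero, sub_zero]
  rw [Real.norm_eq_abs, abs_div]
  rw [div_le_iff₀ hay]
  calc |f y| ≤ |y| ^ e := hf y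
    _ = |y| ^ (e - 1) * |y| := by
        rw [← Real.rpow_add_one (ne_of_gt hay), sub_add_cancel]

lemma hasDerivAt_abs_rpow {p : ℝ} (hp : 1 < p) (x : ℝ) :
    HasDerivAt (fun y : ℝ => |y| ^ p) (p * psi (p - 1) x) x := by
  have hp1 : 0 < p - 1 := by linarith
  rcases lt_trichotomy x 0 with hx | hx | hx
  · have h := Real.hasDerivAt_rpow_const (x := -x) (p := p) (Or.inl (by linarith [neg_pos.2 hx] : -x ≠ 0))
    have hneg : HasDerivAt (fun y : ℝ => -y) (-1) x := (hasDerivAt_id x).neg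
    have hc := h.comp x hneg
    have he : (fun y : ℝ => |y| ^ p) =ᶠ[𝓝 x] fun y => (-y) ^ p := by
      filter_upwards [eventually_lt_nhds hx] with y hy
      rw [abs_of_neg hy]
    have := hc.congr_of_eventuallyEq he
    refine this.congr_deriv ?_
    rw [psi_of_nonpos hp1 hx.le]
    ring
  · subst hx
    have h0 : HasDerivAt (fun y : ℝ => |y| ^ p) 0 0 := by
      rw [hasDerivAt_iff_tendsto_slope]
      refine squeeze_zero_norm' (slope_zero_bound hp ?_ ?_) (tendsto_abs_rpow hp1)
      · simp [Real.zero_rpow (by linarith : p ≠ 0)]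
      · intro y
        rw [abs_of_nonneg (Real.rpow_nonneg (abs_nonneg y) p)]
    simpa [psi_zero] using h0
  · have h := Real.hasDerivAt_rpow_const (x := x) (p := p) (Or.inl (ne_of_gt hx))
    have he : (fun y : ℝ => |y| ^ p) =ᶠ[𝓝 x] fun y => y ^ p := by
      filter_upwards [eventually_gt_nhds hx] with y hy
      rw [abs_of_pos hy]
    have := h.congr_of_eventuallyEq he
    refine this.congr_deriv ?_
    rw [psi_of_nonneg hp1 hx.le]

lemma hasDerivAt_psi {s : ℝ} (hs : 1 ≤ s) (x : ℝ) :
    HasDerivAt (fun y : ℝ => psi s y) (s * |x| ^ (s - 1)) x := by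
  have hs0 : 0 < s := by linarith
  rcases lt_trichotomy x 0 with hx | hx | hx
  · have h := Real.hasDerivAt_rpow_const (x := -x) (p := s) (Or.inl (by linarith [neg_pos.2 hx] : -x ≠ 0))
    have hneg : HasDerivAt (fun y : ℝ => -y) (-1) x := (hasDerivAt_id x).neg
    have hc := (h.comp x hneg).neg
    have he : (fun y : ℝ => psi s y) =ᶠ[𝓝 x] fun y => -((-y) ^ s) := by
      filter_upwards [eventually_lt_nhds hx] with y hy
      rw [psi_of_nonpos hs0 hy.le]
    have := hc.congr_of_eventuallyEq he
    refine this.congr_deriv ?_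
    rw [abs_of_neg hx]
    ring
  · subst hx
    rcases eq_or_lt_of_le hs with hs1 | hs1
    · have : HasDerivAt (fun y : ℝ => psi s y) 1 0 := by
        refine (hasDerivAt_id (0:ℝ)).congr_of_eventuallyEq (Eventually.of_forall fun y => ?_)
        rw [← hs1]; simp [psi]
      simpa [← hs1] using this
    · have h0 : HasDerivAt (fun y : ℝ => psi s y) 0 0 := by
        rw [hasDerivAt_iff_tendsto_slope]
        refine squeeze_zero_norm' (slope_zero_bound hs1 (psi_zero s) ?_) (tendsto_abs_rpow (by linarith))
        intro y
        rw [abs_psi hs0]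
      have : s * |(0:ℝ)| ^ (s - 1) = 0 := by
        simp [Real.zero_rpow (by linarith : s - 1 ≠ 0)]
      rw [this]
      exact h0
  · have h := Real.hasDerivAt_rpow_const (x := x) (p := s) (Or.inl (ne_of_gt hx))
    have he : (fun y : ℝ => psi s y) =ᶠ[𝓝 x] fun y => y ^ s := by
      filter_upwards [eventually_gt_nhds hx] with y hy
      rw [psi_of_nonneg hs0 hy.le]
    have := h.congr_of_eventuallyEq he
    refine this.congr_deriv ?_
    rw [abs_of_pos hx]

lemma mvt {g g' : ℝ → ℝ} (hg : ∀ x, HasDerivAt g (g' x) x) {b : ℝ} (hb : b ≠ 0) :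
    ∃ c, c ≠ 0 ∧ |c| < |b| ∧ g b - g 0 = g' c * b := by
  rcases hb.lt_or_gt with h | h
  · obtain ⟨c, hc, hce⟩ := exists_hasDerivAt_eq_slope g g' h
      (fun x _ => (hg x).continuousAt.continuousWithinAt) (fun x _ => hg x)
    refine ⟨c, ne_of_lt hc.2, ?_, ?_⟩
    · rw [abs_of_neg hc.2, abs_of_neg h]; linarith [hc.1]
    · rw [eq_div_iff (by linarith : (0:ℝ) - b ≠ 0)] at hce
      linear_combination hce
  · obtain ⟨c, hc, hce⟩ := exists_hasDerivAt_eq_slope g g' h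
      (fun x _ => (hg x).continuousAt.continuousWithinAt) (fun x _ => hg x)
    refine ⟨c, ne_of_gt hc.1, ?_, ?_⟩
    · rw [abs_of_pos hc.1, abs_of_pos h]; linarith [hc.2]
    · rw [eq_div_iff (by linarith : b - 0 ≠ 0)] at hce
      linear_combination -hce

lemma deriv_translate {p : ℝ} (hp : 1 < p) (a : ℝ) :
    ∀ t : ℝ, HasDerivAt (fun t : ℝ => |a + t| ^ p) (p * psi (p - 1) (a + t)) t := by
  intro t
  have h1 := hasDerivAt_abs_rpow hp (a + t)
  have h2 : HasDerivAt (fun t : ℝ => a + t) 1 t := (hasDerivAt_id t).const_add a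
  simpa [Function.comp_def] using h1.comp t h2

lemma psi_translate_deriv {p : ℝ} (hp : 2 ≤ p) (a : ℝ) :
    ∀ t : ℝ, HasDerivAt (fun t : ℝ => psi (p - 1) (a + t)) ((p - 1) * |a + t| ^ (p - 2)) t := by
  intro t
  have h1 := hasDerivAt_psi (s := p - 1) (by linarith) (a + t)
  have h2 : HasDerivAt (fun t : ℝ => a + t) 1 t := (hasDerivAt_id t).const_add a
  have := h1.comp t h2
  simpa [Function.comp_def, show p - 1 - 1 = p - 2 by ring] using this

/-- Key pointwise inequality for `1 < p ≤ 2`. -/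
lemma keyI {p : ℝ} (hp : 1 < p) (hp2 : p ≤ 2) (a b : ℝ) :
    |a + b| ^ p ≤ |a| ^ p + p * psi (p - 1) a * b + 2 * p * |b| ^ p := by
  rcases eq_or_ne b 0 with hb | hb
  · simp [hb, Real.zero_rpow (by linarith : p ≠ 0)]
  obtain ⟨c, hc0, hcb, hce⟩ := mvt (deriv_translate hp a) hb
  have h0 : |a + (0:ℝ)| ^ p = |a| ^ p := by norm_num
  have expand : |a + b| ^ p - |a| ^ p = p * psi (p - 1) (a + c) * b := by
    have := hce
    rw [h0] at this
    exact this
  have hplus : p * psi (p - 1) (a + c) * b =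
      p * psi (p - 1) a * b + p * (psi (p - 1) (a + c) - psi (p - 1) a) * b := by ring
  have hhl := psi_holder (s := p - 1) (by linarith) (by linarith) (a + c) a
  have hdiff : |psi (p - 1) (a + c) - psi (p - 1) a| ≤ 2 * |b| ^ (p - 1) := by
    have h1 : |a + c - a| = |c| := by ring_nf
    rw [h1] at hhl
    have h2 : |c| ^ (p - 1) ≤ |b| ^ (p - 1) :=
      Real.rpow_le_rpow (abs_nonneg c) hcb.le (by linarith)
    linarith
  have hrem : p * (psi (p - 1) (a + c) - psi (p - 1) a) * b ≤ 2 * p * |b| ^ p := by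
    have hb0 : 0 < |b| := abs_pos.2 hb
    calc p * (psi (p - 1) (a + c) - psi (p - 1) a) * b
        ≤ |p * (psi (p - 1) (a + c) - psi (p - 1) a) * b| := le_abs_self _
      _ = p * |psi (p - 1) (a + c) - psi (p - 1) a| * |b| := by
          rw [abs_mul, abs_mul, abs_of_pos (by linarith : (0:ℝ) < p)]
      _ ≤ p * (2 * |b| ^ (p - 1)) * |b| := by
          have hp0 : (0:ℝ) ≤ p := by linarith
          have := mul_le_mul_of_nonneg_left hdiff hp0
          exact mul_le_mul_of_nonneg_right this (abs_nonneg b)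
      _ = 2 * p * (|b| ^ (p - 1) * |b|) := by ring
      _ = 2 * p * |b| ^ p := by
          rw [← Real.rpow_add_one (ne_of_gt hb0), sub_add_cancel]
  linarith [expand, hplus.symm ▸ expand]

/-- Key pointwise inequality for `2 < p`. -/
lemma keyII {p : ℝ} (hp : 2 < p) (a b : ℝ) :
    |a + b| ^ p ≤ |a| ^ p + p * psi (p - 1) a * b +
      p * (p - 1) * 2 ^ (p - 2) * (|a| ^ (p - 2) * b ^ 2 + |b| ^ p) := by
  have hp1 : 1 < p := by linarith
  rcases eq_or_ne b 0 with hb | hb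
  · simp [hb, Real.zero_rpow (by linarith : p ≠ 0)]
  obtain ⟨c, hc0, hcb, hce⟩ := mvt (deriv_translate hp1 a) hb
  have h0 : |a + (0:ℝ)| ^ p = |a| ^ p := by norm_num
  rw [h0] at hce
  obtain ⟨d, hd0, hdc, hde⟩ := mvt (psi_translate_deriv hp.le a) hc0
  have h0' : a + (0:ℝ) = a := by ring
  rw [h0'] at hde
  -- |a + b|^p - |a|^p - p ψ(a) b = p (ψ(a+c) - ψ(a)) b = p (p-1) |a+d|^{p-2} c b
  have expand : |a + b| ^ p - |a| ^ p - p * psi (p - 1) a * b =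
      p * ((p - 1) * |a + d| ^ (p - 2) * c) * b := by
    rw [← hde]; linear_combination hce
  have hbnd : |a + d| ^ (p - 2) ≤ 2 ^ (p - 2) * (|a| ^ (p - 2) + |b| ^ (p - 2)) := by
    have h1 : |a + d| ≤ |a| + |b| := by
      calc |a + d| ≤ |a| + |d| := abs_add_le a d
        _ ≤ |a| + |b| := by linarith [hdc.trans hcb]
    calc |a + d| ^ (p - 2) ≤ (|a| + |b|) ^ (p - 2) :=
          Real.rpow_le_rpow (abs_nonneg _) h1 (by linarith)
      _ ≤ 2 ^ (p - 2) * (|a| ^ (p - 2) + |b| ^ (p - 2)) :=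
          add_rpow_le_two_rpow_mul (abs_nonneg a) (abs_nonneg b) (by linarith)
  have hcb2 : |c| * |b| ≤ b ^ 2 := by
    calc |c| * |b| ≤ |b| * |b| := mul_le_mul_of_nonneg_right hcb.le (abs_nonneg b)
      _ = b ^ 2 := by rw [← abs_mul, abs_mul_self]; ring
  have hrem : p * ((p - 1) * |a + d| ^ (p - 2) * c) * b ≤
      p * (p - 1) * 2 ^ (p - 2) * (|a| ^ (p - 2) * b ^ 2 + |b| ^ p) := by
    have hb0 : 0 < |b| := abs_pos.2 hb
    have hA : (0:ℝ) ≤ |a| ^ (p - 2) := Real.rpow_nonneg (abs_nonneg a) _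
    have hB : (0:ℝ) ≤ |b| ^ (p - 2) := Real.rpow_nonneg (abs_nonneg b) _
    have h2 : (0:ℝ) ≤ 2 ^ (p - 2) := Real.rpow_nonneg (by norm_num) _
    calc p * ((p - 1) * |a + d| ^ (p - 2) * c) * b
        ≤ |p * ((p - 1) * |a + d| ^ (p - 2) * c) * b| := le_abs_self _
      _ = p * (p - 1) * |a + d| ^ (p - 2) * (|c| * |b|) := by
          rw [abs_mul, abs_mul, abs_mul, abs_mul,
            abs_of_pos (by linarith : (0:ℝ) < p), abs_of_pos (by linarith : (0:ℝ) < p - 1),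
            abs_of_nonneg (Real.rpow_nonneg (abs_nonneg _) _)]
          ring
      _ ≤ p * (p - 1) * (2 ^ (p - 2) * (|a| ^ (p - 2) + |b| ^ (p - 2))) * b ^ 2 := by
          apply mul_le_mul
          · exact mul_le_mul_of_nonneg_left hbnd (by nlinarith)
          · exact hcb2
          · exact mul_nonneg (abs_nonneg c) (abs_nonneg b)
          · exact mul_nonneg (mul_nonneg (by linarith) (by linarith))
              (mul_nonneg h2 (by linarith))
      _ = p * (p - 1) * 2 ^ (p - 2) * (|a| ^ (p - 2) * b ^ 2 + |b| ^ (p - 2) * b ^ 2) := by ring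
      _ = p * (p - 1) * 2 ^ (p - 2) * (|a| ^ (p - 2) * b ^ 2 + |b| ^ p) := by
          have : |b| ^ (p - 2) * b ^ 2 = |b| ^ p := by
            rw [← sq_abs b, ← Real.rpow_natCast |b| 2, ← Real.rpow_add hb0]
            norm_num
          rw [this]
  linarith [expand]

lemma continuous_abs_rpow {e : ℝ} (he : 0 < e) : Continuous fun t : ℝ => |t| ^ e := by
  rw [continuous_iff_continuousAt]
  intro x
  rcases eq_or_ne x 0 with rfl | hx
  · have h1 := Real.continuousAt_rpow_const (|(0:ℝ)|) e (Or.inr he.le)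
    have h2 : ContinuousAt (fun y : ℝ => |y|) (0:ℝ) := continuous_abs.continuousAt
    exact h1.comp h2
  · exact (Real.continuousAt_rpow_const (|x|) e (Or.inl (abs_ne_zero.2 hx))).comp
      continuous_abs.continuousAt

lemma continuous_psi {s : ℝ} (hs : 0 < s) : Continuous (psi s) := by
  rw [continuous_iff_continuousAt]
  intro x
  rcases eq_or_ne x 0 with rfl | hx
  · have h2 : Tendsto (fun y : ℝ => |y| ^ s) (𝓝 0) (𝓝 0) := by
      have h0 : |(0:ℝ)| ^ s = 0 := by
        rw [abs_zero, Real.zero_rpow (ne_of_gt hs)]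
      have h3 := (continuous_abs_rpow hs).tendsto 0
      rwa [h0] at h3
    have : Tendsto (psi s) (𝓝 0) (𝓝 0) :=
      squeeze_zero_norm (fun y => le_of_eq (by rw [Real.norm_eq_abs, abs_psi hs])) h2
    simpa [ContinuousAt, psi_zero] using this
  · exact continuousAt_id.mul
      ((Real.continuousAt_rpow_const (|x|) (s - 1) (Or.inl (abs_ne_zero.2 hx))).comp
        continuous_abs.continuousAt)

/-- conjugate exponent facts -/
lemma conj_facts (hp : 1 < p) (hpq : 1 / p + 1 / q = 1) :
    1 < q ∧ (p - 1) * q = p ∧ Real.HolderConjugate p q := by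
  have hp0 : 0 < p := by linarith
  have h1 : 1 / q = 1 - 1 / p := by linarith
  have h2 : 0 < 1 / q := by
    rw [h1]
    have : 1 / p < 1 := by rw [div_lt_one hp0]; exact hp
    linarith
  have hq0 : 0 < q := by
    by_contra h
    push_neg at h
    have h3 : 1 / q ≤ 0 := div_nonpos_of_nonneg_of_nonpos (by norm_num) h
    linarith
  have hq1 : 1 < q := by
    have h3 : 1 / q < 1 := by
      have : 0 < 1 / p := by positivity
      linarith
    rwa [div_lt_one hq0] at h3
  refine ⟨hq1, ?_, Real.holderConjugate_iff.mpr ⟨hp, by rw [← one_div, ← one_div]; exact hpq⟩⟩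
  have hpne : p ≠ 0 := ne_of_gt hp0
  have hqne : q ≠ 0 := ne_of_gt hq0
  field_simp at hpq
  nlinarith [hpq]

lemma memLp_abs_rpow (hp0 : 0 < p) {f : X → ℝ} (hf : MemLp f (ENNReal.ofReal p) μ)
    {e : ℝ} (he : 0 < e) :
    MemLp (fun x => |f x| ^ e) (ENNReal.ofReal (p / e)) μ := by
  have hpe : (0:ℝ) ≤ p / e := by positivity
  constructor
  · exact (continuous_abs_rpow he).comp_aestronglyMeasurable hf.1
  · have key := eLpNorm_norm_rpow f he (p := ENNReal.ofReal (p / e)) (μ := μ)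
    have hmul : ENNReal.ofReal (p / e) * ENNReal.ofReal e = ENNReal.ofReal p := by
      rw [← ENNReal.ofReal_mul hpe]
      congr 1
      field_simp
    have heq : eLpNorm (fun x => |f x| ^ e) (ENNReal.ofReal (p / e)) μ =
        eLpNorm f (ENNReal.ofReal p) μ ^ e := by
      rw [← hmul, ← key]
      apply eLpNorm_congr_ae
      filter_upwards with x
      rw [Real.norm_eq_abs]
    rw [heq]
    exact ENNReal.rpow_lt_top_of_nonneg he.le hf.2.ne

lemma memLp_psi (hp : 1 < p) (hpq : 1 / p + 1 / q = 1) {f : X → ℝ}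
    (hf : MemLp f (ENNReal.ofReal p) μ) :
    MemLp (fun x => psi (p - 1) (f x)) (ENNReal.ofReal q) μ := by
  obtain ⟨hq1, hconj, _⟩ := conj_facts hp hpq
  have hp1 : (0:ℝ) < p - 1 := by linarith
  constructor
  · exact (continuous_psi hp1).comp_aestronglyMeasurable hf.1
  · have key := eLpNorm_norm_rpow f hp1 (p := ENNReal.ofReal q) (μ := μ)
    have hmul : ENNReal.ofReal q * ENNReal.ofReal (p - 1) = ENNReal.ofReal p := by
      rw [← ENNReal.ofReal_mul (by linarith : (0:ℝ) ≤ q)]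
      congr 1
      nlinarith [hconj]
    have heq : eLpNorm (fun x => psi (p - 1) (f x)) (ENNReal.ofReal q) μ =
        eLpNorm f (ENNReal.ofReal p) μ ^ (p - 1) := by
      rw [← hmul, ← key]
      apply eLpNorm_congr_norm_ae
      filter_upwards with x
      simp only [Real.norm_eq_abs]
      rw [abs_psi hp1, abs_of_nonneg (Real.rpow_nonneg (abs_nonneg _) _)]
    rw [heq]
    exact ENNReal.rpow_lt_top_of_nonneg hp1.le hf.2.ne

lemma id1 (hp : 1 < p) (t : ℝ) : t * psi (p - 1) t = |t| ^ p := by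
  rcases eq_or_ne t 0 with rfl | ht
  · simp [psi_zero, Real.zero_rpow (by linarith : p ≠ 0)]
  · have h0 : 0 < |t| := abs_pos.2 ht
    rw [psi]
    have e : p - 1 - 1 = p - 2 := by ring
    rw [e, show |t| ^ p = |t| ^ ((2:ℝ) + (p - 2)) by norm_num,
      Real.rpow_add h0, Real.rpow_two, sq_abs]
    ring

lemma id2 (hp : 1 < p) (hpq : 1 / p + 1 / q = 1) (hconj : (p - 1) * q = p) (t : ℝ) :
    |psi (p - 1) t| ^ q = |t| ^ p := by
  have hp1 : (0:ℝ) < p - 1 := by linarith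
  rw [abs_psi hp1, ← Real.rpow_mul (abs_nonneg t), hconj]

/-- Hölder: product of MemLp's with conjugate real exponents is integrable -/
lemma integrable_mul_conj {r r' : ℝ} (hrr : Real.HolderConjugate r r') {f g : X → ℝ}
    (hf : MemLp f (ENNReal.ofReal r) μ) (hg : MemLp g (ENNReal.ofReal r') μ) :
    Integrable (fun x => f x * g x) μ := by
  haveI : ENNReal.HolderTriple (ENNReal.ofReal r) (ENNReal.ofReal r') 1 :=
    ENNReal.holderConjugate_iff.mpr hrr.inv_add_inv_ennreal
  have := hg.smul (φ := f) hf (r := 1)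
  rw [memLp_one_iff_integrable] at this
  exact this.congr (by filter_upwards with x; rfl)

lemma integrable_abs_rpow (hp : 1 < p) {f : X → ℝ} (hf : MemLp f (ENNReal.ofReal p) μ) :
    Integrable (fun x => |f x| ^ p) μ := by
  have h := hf.integrable_norm_rpow (by simp only [ne_eq, ENNReal.ofReal_eq_zero, not_le]; linarith) ENNReal.ofReal_ne_top
  simpa [Real.norm_eq_abs, ENNReal.toReal_ofReal (by linarith : (0:ℝ) ≤ p)] using h

lemma step_common (hp : 1 < p) (hpq : 1 / p + 1 / q = 1) {S v : X → ℝ}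
    (hS : MemLp S (ENNReal.ofReal p) μ) (hv : MemLp v (ENNReal.ofReal p) μ)
    (hcross : |∫ x, v x * psi (p - 1) (S x) ∂μ| ≤ 1) :
    p * ∫ x, psi (p - 1) (S x) * v x ∂μ ≤ p ∧
      Integrable (fun x => psi (p - 1) (S x) * v x) μ := by
  obtain ⟨hq1, hc, hconj⟩ := conj_facts hp hpq
  have i2 : Integrable (fun x => psi (p - 1) (S x) * v x) μ :=
    integrable_mul_conj hconj.symm (memLp_psi hp hpq hS) hv
  refine ⟨?_, i2⟩
  have hcomm : ∫ x, psi (p - 1) (S x) * v x ∂μ = ∫ x, v x * psi (p - 1) (S x) ∂μ :=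
    integral_congr_ae (Eventually.of_forall fun x => mul_comm _ _)
  have h1 : ∫ x, psi (p - 1) (S x) * v x ∂μ ≤ 1 := by
    rw [hcomm]
    exact (le_abs_self _).trans hcross
  calc p * ∫ x, psi (p - 1) (S x) * v x ∂μ ≤ p * 1 :=
        mul_le_mul_of_nonneg_left h1 (by linarith)
    _ = p := mul_one p

/-- Step bound for `1 < p ≤ 2`. -/
lemma step_bound_I (hp : 1 < p) (hp2 : p ≤ 2) (hpq : 1 / p + 1 / q = 1) {S v : X → ℝ}
    (hS : MemLp S (ENNReal.ofReal p) μ) (hv : MemLp v (ENNReal.ofReal p) μ)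
    (hcross : |∫ x, v x * psi (p - 1) (S x) ∂μ| ≤ 1) :
    ∫ x, |S x + v x| ^ p ∂μ ≤
      (∫ x, |S x| ^ p ∂μ) + p + 2 * p * ∫ x, |v x| ^ p ∂μ := by
  obtain ⟨hcross', i2⟩ := step_common hp hpq hS hv hcross
  have i1 : Integrable (fun x => |S x| ^ p) μ := integrable_abs_rpow hp hS
  have i4 : Integrable (fun x => |v x| ^ p) μ := integrable_abs_rpow hp hv
  have iL : Integrable (fun x => |S x + v x| ^ p) μ := by
    have := integrable_abs_rpow hp (hS.add hv)
    exact this.congr (Eventually.of_forall fun x => rfl)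
  have i2' : Integrable (fun x => p * psi (p - 1) (S x) * v x) μ := by
    have := i2.const_mul p
    exact this.congr (Eventually.of_forall fun x => by ring)
  have i4' : Integrable (fun x => 2 * p * |v x| ^ p) μ := i4.const_mul _
  have hmono : ∫ x, |S x + v x| ^ p ∂μ ≤
      ∫ x, (|S x| ^ p + p * psi (p - 1) (S x) * v x + 2 * p * |v x| ^ p) ∂μ := by
    refine integral_mono iL ((i1.add i2').add i4') ?_
    intro x
    exact keyI hp hp2 (S x) (v x)
  have hsplit : ∫ x, (|S x| ^ p + p * psi (p - 1) (S x) * v x + 2 * p * |v x| ^ p) ∂μ =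
      (∫ x, |S x| ^ p ∂μ) + p * (∫ x, psi (p - 1) (S x) * v x ∂μ) +
        2 * p * ∫ x, |v x| ^ p ∂μ := by
    have i12 : Integrable (fun x => |S x| ^ p + p * psi (p - 1) (S x) * v x) μ := i1.add i2'
    rw [integral_add i12 i4', integral_add i1 i2']
    rw [show (fun x => p * psi (p - 1) (S x) * v x) = fun x => p * (psi (p - 1) (S x) * v x) by
      funext x; ring]
    rw [integral_const_mul, integral_const_mul]
  rw [hsplit] at hmono
  linarith

/-- Step bound for `2 < p`. -/
lemma step_bound_II (hp : 2 < p) (hpq : 1 / p + 1 / q = 1) {S v : X → ℝ}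
    (hS : MemLp S (ENNReal.ofReal p) μ) (hv : MemLp v (ENNReal.ofReal p) μ)
    (hcross : |∫ x, v x * psi (p - 1) (S x) ∂μ| ≤ 1) :
    ∫ x, |S x + v x| ^ p ∂μ ≤
      (∫ x, |S x| ^ p ∂μ) + p + p * (p - 1) * 2 ^ (p - 2) *
        ((∫ x, |S x| ^ p ∂μ) ^ ((p - 2) / p) * (∫ x, |v x| ^ p ∂μ) ^ (2 / p)
          + ∫ x, |v x| ^ p ∂μ) := by
  have hp1 : 1 < p := by linarith
  have hp0 : (0:ℝ) < p := by linarith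
  obtain ⟨hcross', i2⟩ := step_common hp1 hpq hS hv hcross
  have i1 : Integrable (fun x => |S x| ^ p) μ := integrable_abs_rpow hp1 hS
  have i4 : Integrable (fun x => |v x| ^ p) μ := integrable_abs_rpow hp1 hv
  have iL : Integrable (fun x => |S x + v x| ^ p) μ := by
    have := integrable_abs_rpow hp1 (hS.add hv)
    exact this.congr (Eventually.of_forall fun x => rfl)
  -- Hölder for the middle term
  have hconj2 : Real.HolderConjugate (p / (p - 2)) (p / 2) := by
    rw [Real.holderConjugate_iff]
    constructor
    · rw [lt_div_iff₀ (by linarith)]; linarith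
    · rw [inv_div, inv_div]; field_simp; ring
  have hm1 : MemLp (fun x => |S x| ^ (p - 2)) (ENNReal.ofReal (p / (p - 2))) μ :=
    memLp_abs_rpow hp0 hS (by linarith)
  have hm2 : MemLp (fun x => v x ^ 2) (ENNReal.ofReal (p / 2)) μ := by
    have h := memLp_abs_rpow hp0 hv (by norm_num : (0:ℝ) < 2)
    exact h.ae_eq (Eventually.of_forall fun x => by rw [Real.rpow_two, sq_abs])
  have i3 : Integrable (fun x => |S x| ^ (p - 2) * v x ^ 2) μ :=
    integrable_mul_conj hconj2 hm1 hm2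
  have e1 : ∀ x : X, (|S x| ^ (p - 2)) ^ (p / (p - 2)) = |S x| ^ p := by
    intro x
    rw [← Real.rpow_mul (abs_nonneg _)]
    congr 1
    field_simp [show p - 2 ≠ 0 by linarith]
  have e2 : ∀ x : X, (v x ^ 2) ^ (p / 2) = |v x| ^ p := by
    intro x
    rw [← sq_abs, ← Real.rpow_two, ← Real.rpow_mul (abs_nonneg _)]
    congr 1
    ring
  have hH := integral_mul_le_Lp_mul_Lq_of_nonneg hconj2
      (Eventually.of_forall fun x => Real.rpow_nonneg (abs_nonneg (S x)) _)
      (Eventually.of_forall fun x => sq_nonneg (v x)) hm1 hm2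
  simp_rw [e1, e2] at hH
  rw [one_div_div, show 1 / (p / 2) = 2 / p by rw [one_div_div]] at hH
  -- now assemble
  set C := p * (p - 1) * 2 ^ (p - 2) with hC
  have hC0 : 0 ≤ C := by
    have : (0:ℝ) ≤ 2 ^ (p - 2) := Real.rpow_nonneg (by norm_num) _
    apply mul_nonneg (mul_nonneg (by linarith) (by linarith)) this
  have i2' : Integrable (fun x => p * psi (p - 1) (S x) * v x) μ := by
    have := i2.const_mul p
    exact this.congr (Eventually.of_forall fun x => by ring)
  have i34 : Integrable (fun x => C * (|S x| ^ (p - 2) * v x ^ 2 + |v x| ^ p)) μ :=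
    (i3.add i4).const_mul C
  have hmono : ∫ x, |S x + v x| ^ p ∂μ ≤
      ∫ x, (|S x| ^ p + p * psi (p - 1) (S x) * v x +
        C * (|S x| ^ (p - 2) * v x ^ 2 + |v x| ^ p)) ∂μ := by
    refine integral_mono iL ((i1.add i2').add i34) ?_
    intro x
    exact keyII hp (S x) (v x)
  have hsplit : ∫ x, (|S x| ^ p + p * psi (p - 1) (S x) * v x +
        C * (|S x| ^ (p - 2) * v x ^ 2 + |v x| ^ p)) ∂μ =
      (∫ x, |S x| ^ p ∂μ) + p * (∫ x, psi (p - 1) (S x) * v x ∂μ) +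
        C * ((∫ x, |S x| ^ (p - 2) * v x ^ 2 ∂μ) + ∫ x, |v x| ^ p ∂μ) := by
    have i12 : Integrable (fun x => |S x| ^ p + p * psi (p - 1) (S x) * v x) μ := i1.add i2'
    rw [integral_add i12 i34, integral_add i1 i2']
    rw [show (fun x => p * psi (p - 1) (S x) * v x) = fun x => p * (psi (p - 1) (S x) * v x) by
      funext x; ring]
    rw [integral_const_mul, integral_const_mul, integral_add i3 i4]
  rw [hsplit] at hmono
  have hfinal : C * ((∫ x, |S x| ^ (p - 2) * v x ^ 2 ∂μ) + ∫ x, |v x| ^ p ∂μ) ≤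
      C * ((∫ x, |S x| ^ p ∂μ) ^ ((p - 2) / p) * (∫ x, |v x| ^ p ∂μ) ^ (2 / p)
        + ∫ x, |v x| ^ p ∂μ) := by
    apply mul_le_mul_of_nonneg_left _ hC0
    have := hH
    linarith
  linarith

/-- The norm on `Lp ℝ (ofReal q) μ` as an integral. -/
lemma Lp_norm_eq (hq1 : 1 < q) [Fact (1 ≤ ENNReal.ofReal q)]
    (w : Lp ℝ (ENNReal.ofReal q) μ) :
    ‖w‖ = (∫ x, ‖w x‖ ^ q ∂μ) ^ (1 / q) := by
  have hq0 : (0:ℝ) < q := by linarith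
  have hne0 : ENNReal.ofReal q ≠ 0 := by
    simp only [ne_eq, ENNReal.ofReal_eq_zero, not_le]; linarith
  rw [Lp.norm_def, MemLp.eLpNorm_eq_integral_rpow_norm hne0 ENNReal.ofReal_ne_top (Lp.memLp w)]
  rw [ENNReal.toReal_ofReal (Real.rpow_nonneg (integral_nonneg fun x =>
    Real.rpow_nonneg (norm_nonneg _) _) _)]
  rw [ENNReal.toReal_ofReal hq0.le, one_div]

/-- Uniform bound on the `p`-integrals from weak convergence, via Banach–Steinhaus. -/
lemma uniform_bound (hp : 1 < p) (hpq : 1 / p + 1 / q = 1)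
    (u : ℕ → X → ℝ) (hu : ∀ i, MemLp (u i) (ENNReal.ofReal p) μ)
    (hweak : ∀ w : X → ℝ, MemLp w (ENNReal.ofReal q) μ →
      Tendsto (fun i => ∫ x, u i x * w x ∂μ) atTop (𝓝 0)) :
    ∃ B : ℝ, 1 ≤ B ∧ ∀ i, ∫ x, |u i x| ^ p ∂μ ≤ B := by
  obtain ⟨hq1, hconj, hpq'⟩ := conj_facts hp hpq
  have hp0 : (0:ℝ) < p := by linarith
  haveI : Fact (1 ≤ ENNReal.ofReal q) := ⟨ENNReal.one_le_ofReal.2 hq1.le⟩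
  -- the functionals
  have hbound : ∀ i (w : Lp ℝ (ENNReal.ofReal q) μ),
      ‖∫ x, u i x * w x ∂μ‖ ≤ ((∫ x, |u i x| ^ p ∂μ) ^ (1 / p)) * ‖w‖ := by
    intro i w
    calc ‖∫ x, u i x * w x ∂μ‖ ≤ ∫ x, ‖u i x * w x‖ ∂μ := norm_integral_le_integral_norm _
      _ = ∫ x, ‖u i x‖ * ‖w x‖ ∂μ := by
          apply integral_congr_ae
          filter_upwards with x
          rw [norm_mul]
      _ ≤ (∫ x, ‖u i x‖ ^ p ∂μ) ^ (1 / p) * (∫ x, ‖w x‖ ^ q ∂μ) ^ (1 / q) :=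
          integral_mul_norm_le_Lp_mul_Lq hpq' (hu i) (Lp.memLp w)
      _ = ((∫ x, |u i x| ^ p ∂μ) ^ (1 / p)) * ‖w‖ := by
          have h5 : (∫ x, ‖u i x‖ ^ p ∂μ) = ∫ x, |u i x| ^ p ∂μ :=
            integral_congr_ae (by filter_upwards with x; rw [Real.norm_eq_abs])
          rw [h5, Lp_norm_eq hq1 w]
  let T : ℕ → Lp ℝ (ENNReal.ofReal q) μ →L[ℝ] ℝ := fun i =>
    LinearMap.mkContinuous
      { toFun := fun w => ∫ x, u i x * w x ∂μ
        map_add' := by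
          intro w v
          have hw : Integrable (fun x => u i x * w x) μ :=
            integrable_mul_conj hpq' (hu i) (Lp.memLp w)
          have hv : Integrable (fun x => u i x * v x) μ :=
            integrable_mul_conj hpq' (hu i) (Lp.memLp v)
          have h1 : ∫ x, u i x * (w + v : Lp ℝ (ENNReal.ofReal q) μ) x ∂μ =
              ∫ x, (u i x * w x + u i x * v x) ∂μ := by
            apply integral_congr_ae
            filter_upwards [Lp.coeFn_add w v] with x hx
            rw [hx]
            simp [mul_add]
          rw [h1, integral_add hw hv]
        map_smul' := by
          intro c w
          have h1 : ∫ x, u i x * (c • w : Lp ℝ (ENNReal.ofReal q) μ) x ∂μ =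
              ∫ x, c * (u i x * w x) ∂μ := by
            apply integral_congr_ae
            filter_upwards [Lp.coeFn_smul c w] with x hx
            rw [hx]
            simp [smul_eq_mul]
            ring
          rw [h1, integral_const_mul]
          rfl }
      ((∫ x, |u i x| ^ p ∂μ) ^ (1 / p)) (fun w => hbound i w)
  have hTapp : ∀ i w, T i w = ∫ x, u i x * w x ∂μ := fun i w => rfl
  -- pointwise bounds
  have hpt : ∀ w : Lp ℝ (ENNReal.ofReal q) μ, ∃ C, ∀ i, ‖T i w‖ ≤ C := by
    intro w
    have ht := (hweak (w : X → ℝ) (Lp.memLp w)).norm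
    simp only [norm_zero] at ht
    obtain ⟨C, hC⟩ := ht.bddAbove_range
    refine ⟨C, fun i => ?_⟩
    have : ‖∫ x, u i x * w x ∂μ‖ ∈ Set.range fun i => ‖∫ x, u i x * w x ∂μ‖ := ⟨i, rfl⟩
    exact hC this
  obtain ⟨C₀, hC₀⟩ := banach_steinhaus hpt
  set C₁ := max C₀ 0 with hC₁
  refine ⟨max 1 (C₁ ^ p), le_max_left _ _, fun i => ?_⟩
  set I := ∫ x, |u i x| ^ p ∂μ with hI
  have hI0 : 0 ≤ I := integral_nonneg fun x => Real.rpow_nonneg (abs_nonneg _) _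
  rcases le_or_gt I 1 with h1 | h1
  · exact h1.trans (le_max_left _ _)
  · -- test against the dual function
    have hmem := memLp_psi hp hpq (hu i)
    set w := hmem.toLp _ with hw
    have hwcoe : (w : X → ℝ) =ᵐ[μ] fun x => psi (p - 1) (u i x) := MemLp.coeFn_toLp hmem
    have hTw : T i w = I := by
      rw [hTapp, hI]
      apply integral_congr_ae
      filter_upwards [hwcoe] with x hx
      rw [hx, id1 hp]
    have hnw : ‖w‖ = I ^ (1 / q) := by
      rw [Lp_norm_eq hq1 w]
      congr 1
      apply integral_congr_ae
      filter_upwards [hwcoe] with x hx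
      rw [hx, Real.norm_eq_abs, id2 hp hpq hconj]
    have hle : I ≤ C₁ * I ^ (1 / q) := by
      have h := (T i).le_opNorm w
      rw [hTw, hnw] at h
      have h2 : |I| ≤ ‖T i‖ * I ^ (1 / q) := by
        rw [← Real.norm_eq_abs]
        exact h
      rw [abs_of_nonneg hI0] at h2
      calc I ≤ ‖T i‖ * I ^ (1 / q) := h2
        _ ≤ C₁ * I ^ (1 / q) := by
            apply mul_le_mul_of_nonneg_right ((hC₀ i).trans (le_max_left _ _))
              (Real.rpow_nonneg hI0 _)
    have hIpos : 0 < I := by linarith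
    have hsplit : I = I ^ (1 / q) * I ^ (1 / p) := by
      rw [← Real.rpow_add hIpos]
      nth_rewrite 1 [← Real.rpow_one I]
      congr 1
      linarith
    have hq0 : (0:ℝ) < 1 / q := by positivity
    have hIq : 0 < I ^ (1 / q) := Real.rpow_pos_of_pos hIpos _
    have hfrac : I ^ (1 / p) ≤ C₁ := by
      have hmul : I ^ (1 / p) * I ^ (1 / q) ≤ C₁ * I ^ (1 / q) := by
        calc I ^ (1 / p) * I ^ (1 / q) = I ^ (1 / q) * I ^ (1 / p) := by ring
          _ = I := by rw [← hsplit]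
          _ ≤ C₁ * I ^ (1 / q) := hle
      exact le_of_mul_le_mul_right hmul hIq
    have : I ≤ C₁ ^ p := by
      have h4 := Real.rpow_le_rpow (Real.rpow_nonneg hI0 _) hfrac hp0.le
      rwa [← Real.rpow_mul hI0, one_div, inv_mul_cancel₀ (ne_of_gt hp0), Real.rpow_one] at h4
    exact this.trans (le_max_right _ _)

/-- The common final limiting argument. -/
lemma final_limit (hp : 1 < p) {D s : ℝ} (hD : 0 < D) (hsp : s < p)
    (u : ℕ → X → ℝ) (φ : ℕ → ℕ)
    (hbound : ∀ k : ℕ, (∫ x, |∑ r ∈ Finset.range (k+1), u (φ r) x| ^ p ∂μ) ≤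
      D * ((k : ℝ) + 1) ^ s) :
    Tendsto (fun k : ℕ =>
        (∫ x, |(k : ℝ)⁻¹ * ∑ r ∈ Finset.range k, u (φ r) x| ^ p ∂μ) ^ (1 / p))
      atTop (𝓝 0) := by
  have hp0 : (0:ℝ) < p := by linarith
  have hexp : 0 < 1 - s / p := by
    have : s / p < 1 := (div_lt_one hp0).2 hsp
    linarith
  have h1 : Tendsto (fun x : ℝ => x ^ (s / p - 1)) atTop (𝓝 0) := by
    have := tendsto_rpow_neg_atTop hexp
    simpa [show -(1 - s / p) = s / p - 1 by ring] using this
  have h2 : Tendsto (fun k : ℕ => ((k : ℝ)) ^ (s / p - 1)) atTop (𝓝 0) :=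
    h1.comp tendsto_natCast_atTop_atTop
  have h3 : Tendsto (fun k : ℕ => D ^ (1 / p) * ((k : ℝ)) ^ (s / p - 1)) atTop (𝓝 0) := by
    have := h2.const_mul (D ^ (1 / p))
    simpa using this
  apply squeeze_zero_norm' _ h3
  filter_upwards [eventually_ge_atTop 1] with k hk
  obtain ⟨m, rfl⟩ : ∃ m, k = m + 1 := ⟨k - 1, (Nat.succ_pred_eq_of_pos hk).symm⟩
  set K : ℝ := ((m + 1 : ℕ) : ℝ) with hK
  have hKpos : (0:ℝ) < K := by positivity
  have hKinv : (0:ℝ) ≤ K⁻¹ := inv_nonneg.2 hKpos.le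
  set Sf : X → ℝ := fun x => ∑ r ∈ Finset.range (m+1), u (φ r) x with hSf
  have hA0 : 0 ≤ ∫ x, |Sf x| ^ p ∂μ :=
    integral_nonneg fun x => Real.rpow_nonneg (abs_nonneg _) _
  have e2 : ∫ x, |K⁻¹ * Sf x| ^ p ∂μ = K⁻¹ ^ p * ∫ x, |Sf x| ^ p ∂μ := by
    rw [← integral_const_mul]
    apply integral_congr_ae
    filter_upwards with x
    rw [abs_mul, abs_of_nonneg hKinv, Real.mul_rpow hKinv (abs_nonneg _)]
  have hval : (∫ x, |K⁻¹ * Sf x| ^ p ∂μ) ^ (1 / p) =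
      K⁻¹ * (∫ x, |Sf x| ^ p ∂μ) ^ (1 / p) := by
    rw [e2, Real.mul_rpow (Real.rpow_nonneg hKinv _) hA0, ← Real.rpow_mul hKinv,
      mul_one_div, div_self (ne_of_gt hp0), Real.rpow_one]
  have hbnd : (∫ x, |Sf x| ^ p ∂μ) ^ (1 / p) ≤ D ^ (1 / p) * K ^ (s / p) := by
    have h4 := hbound m
    have h5 : ((m : ℝ) + 1) = K := by push_cast [hK]; ring
    rw [h5] at h4
    calc (∫ x, |Sf x| ^ p ∂μ) ^ (1 / p) ≤ (D * K ^ s) ^ (1 / p) :=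
          Real.rpow_le_rpow hA0 h4 (by positivity)
      _ = D ^ (1 / p) * K ^ (s / p) := by
          rw [Real.mul_rpow hD.le (Real.rpow_nonneg hKpos.le _), ← Real.rpow_mul hKpos.le,
            mul_one_div]
  have hnonneg : 0 ≤ (∫ x, |K⁻¹ * Sf x| ^ p ∂μ) ^ (1 / p) :=
    Real.rpow_nonneg (integral_nonneg fun x => Real.rpow_nonneg (abs_nonneg _) _) _
  rw [Real.norm_eq_abs, abs_of_nonneg hnonneg, hval]
  calc K⁻¹ * (∫ x, |Sf x| ^ p ∂μ) ^ (1 / p) ≤ K⁻¹ * (D ^ (1 / p) * K ^ (s / p)) :=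
        mul_le_mul_of_nonneg_left hbnd hKinv
    _ = D ^ (1 / p) * (K ^ (s / p) / K) := by ring
    _ = D ^ (1 / p) * K ^ (s / p - 1) := by
        rw [Real.rpow_sub hKpos, Real.rpow_one]

end BS

open BS



/-- Banach–Saks theorem for `L^p(μ)`, `1 < p < ∞`: a sequence converging weakly to `0`
has a subsequence whose arithmetic means converge to `0` in `L^p` norm. -/
theorem stmt_5 {X : Type*} [MeasurableSpace X] (μ : Measure X) (p q : ℝ) (hp : 1 < p)
    (hpq : 1 / p + 1 / q = 1)
    (u : ℕ → X → ℝ)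
    (hu : ∀ i, MemLp (u i) (ENNReal.ofReal p) μ)
    (hweak : ∀ w : X → ℝ, MemLp w (ENNReal.ofReal q) μ →
      Tendsto (fun i => ∫ x, u i x * w x ∂μ) atTop (𝓝 0)) :
    ∃ φ : ℕ → ℕ, StrictMono φ ∧
      Tendsto (fun k : ℕ => (∫ x, |(k : ℝ)⁻¹ * ∑ r ∈ Finset.range k, u (φ r) x| ^ p ∂μ) ^ (1 / p))
        atTop (𝓝 0) := by
  classical
  have hp0 : (0:ℝ) < p := by linarith
  obtain ⟨B, hB1, hB⟩ := uniform_bound hp hpq u hu hweak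
  have hB0 : (0:ℝ) < B := by linarith
  -- selection of the next index
  have hsel : ∀ S : X → ℝ, MemLp S (ENNReal.ofReal p) μ → ∀ m : ℕ,
      ∃ n, m < n ∧ |∫ x, u n x * psi (p - 1) (S x) ∂μ| ≤ 1 := by
    intro S hS m
    have ht := hweak _ (memLp_psi hp hpq hS)
    rw [NormedAddCommGroup.tendsto_nhds_zero] at ht
    have h1 := ht 1 one_pos
    have h2 : ∀ᶠ n in atTop, m < n := eventually_gt_atTop m
    obtain ⟨n, hn1, hn2⟩ := (h2.and h1).exists
    exact ⟨n, hn1, by rw [← Real.norm_eq_abs]; exact hn2.le⟩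
  -- recursive construction of the subsequence
  let step : (ℕ × {f : X → ℝ // MemLp f (ENNReal.ofReal p) μ}) →
      ℕ × {f : X → ℝ // MemLp f (ENNReal.ofReal p) μ} :=
    fun s => ⟨(hsel s.2.1 s.2.2 s.1).choose,
      ⟨fun x => s.2.1 x + u ((hsel s.2.1 s.2.2 s.1).choose) x, s.2.2.add (hu _)⟩⟩
  let st : ℕ → ℕ × {f : X → ℝ // MemLp f (ENNReal.ofReal p) μ} :=
    fun k => step^[k] ⟨0, ⟨u 0, hu 0⟩⟩
  let φ : ℕ → ℕ := fun k => (st k).1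
  have hst : ∀ k, st (k+1) = step (st k) := fun k => Function.iterate_succ_apply' step k _
  have hφs : ∀ k, φ (k+1) = (step (st k)).1 := fun k => by
    show (st (k+1)).1 = _
    rw [hst k]
  have hφmono : StrictMono φ := by
    apply strictMono_nat_of_lt_succ
    intro k
    rw [hφs k]
    exact (hsel (st k).2.1 (st k).2.2 (st k).1).choose_spec.1
  have hS1 : ∀ k, (st (k+1)).2.1 = fun x => (st k).2.1 x + u (φ (k+1)) x := by
    intro k
    rw [hφs k, hst k]
  have hSsum : ∀ k, (st k).2.1 = fun x => ∑ r ∈ Finset.range (k+1), u (φ r) x := by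
    intro k
    induction k with
    | zero =>
      funext x
      rw [Finset.sum_range_one]
      rfl
    | succ k ih =>
      funext x
      rw [hS1 k, ih, Finset.sum_range_succ]
  have hcross : ∀ k, |∫ x, u (φ (k+1)) x * psi (p - 1) ((st k).2.1 x) ∂μ| ≤ 1 := by
    intro k
    rw [hφs k]
    exact (hsel (st k).2.1 (st k).2.2 (st k).1).choose_spec.2
  -- the integrals of the partial sums
  set A : ℕ → ℝ := fun k => ∫ x, |(st k).2.1 x| ^ p ∂μ with hA
  have hA0 : ∀ k, 0 ≤ A k := fun k =>
    integral_nonneg fun x => Real.rpow_nonneg (abs_nonneg _) _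
  have hAzero : A 0 ≤ B := by
    have : A 0 = ∫ x, |u 0 x| ^ p ∂μ := rfl
    rw [this]
    exact hB 0
  have hArec : ∀ k, A (k+1) = ∫ x, |(st k).2.1 x + u (φ (k+1)) x| ^ p ∂μ := by
    intro k
    show (∫ x, |(st (k+1)).2.1 x| ^ p ∂μ) = _
    rw [hS1 k]
  refine ⟨φ, hφmono, ?_⟩
  have hgoal : ∀ D s : ℝ, 0 < D → s < p → (∀ k : ℕ, A k ≤ D * ((k : ℝ) + 1) ^ s) →
      Tendsto (fun k : ℕ =>
        (∫ x, |(k : ℝ)⁻¹ * ∑ r ∈ Finset.range k, u (φ r) x| ^ p ∂μ) ^ (1 / p))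
      atTop (𝓝 0) := by
    intro D s hD hsp hbd
    apply final_limit hp hD hsp u φ
    intro k
    have h := hbd k
    simp only [hA] at h
    simp only [hSsum k] at h
    exact h
  rcases le_or_gt p 2 with hp2 | hp2
  · -- case 1 < p ≤ 2
    set E := p + 2 * p * B with hE
    have hE0 : 0 < E := by nlinarith
    have hrec : ∀ k, A (k+1) ≤ A k + E := by
      intro k
      rw [hArec k]
      have h2 := step_bound_I hp hp2 hpq (st k).2.2 (hu (φ (k+1))) (hcross k)
      have h4 : 2 * p * (∫ x, |u (φ (k+1)) x| ^ p ∂μ) ≤ 2 * p * B :=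
        mul_le_mul_of_nonneg_left (hB _) (by linarith)
      calc ∫ x, |(st k).2.1 x + u (φ (k+1)) x| ^ p ∂μ
          ≤ (∫ x, |(st k).2.1 x| ^ p ∂μ) + p + 2 * p * ∫ x, |u (φ (k+1)) x| ^ p ∂μ := h2
        _ ≤ A k + E := by rw [hA]; dsimp only; linarith
    have hgrow : ∀ k, A k ≤ (B + E) * ((k : ℝ) + 1) ^ (1:ℝ) := by
      intro k
      rw [Real.rpow_one]
      induction k with
      | zero => simp; nlinarith [hAzero, hE0]
      | succ k ih =>
        have := hrec k
        push_cast
        have hk0 : (0:ℝ) ≤ (k:ℝ) := Nat.cast_nonneg k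
        nlinarith [this, ih]
    exact hgoal (B + E) 1 (by linarith) (by linarith) hgrow
  · -- case 2 < p
    set C := p * (p - 1) * 2 ^ (p - 2) with hC
    have hC0 : 0 < C := by
      have h2 : (0:ℝ) < 2 ^ (p - 2) := Real.rpow_pos_of_pos (by norm_num) _
      apply mul_pos (mul_pos (by linarith) (by linarith)) h2
    set E := p + C * B with hE
    have hE0 : 0 < E := by nlinarith
    set F := C * B ^ (2 / p) with hF
    have hF0 : 0 < F := by
      have := Real.rpow_pos_of_pos hB0 (2 / p)
      nlinarith
    set t := (p - 2) / p with ht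
    have ht0 : 0 ≤ t := by
      rw [ht]
      exact div_nonneg (by linarith) (by linarith)
    have ht1 : t + 2 / p = 1 := by
      rw [ht]
      field_simp
      ring
    have hrec : ∀ k, A (k+1) ≤ A k + E + F * A k ^ t := by
      intro k
      rw [hArec k]
      have h2 := step_bound_II hp2 hpq (st k).2.2 (hu (φ (k+1))) (hcross k)
      have hv0 : 0 ≤ ∫ x, |u (φ (k+1)) x| ^ p ∂μ :=
        integral_nonneg fun x => Real.rpow_nonneg (abs_nonneg _) _
      have h4 : (∫ x, |u (φ (k+1)) x| ^ p ∂μ) ^ (2 / p) ≤ B ^ (2 / p) :=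
        Real.rpow_le_rpow hv0 (hB _) (by positivity)
      have h5 : (∫ x, |(st k).2.1 x| ^ p ∂μ) ^ ((p - 2) / p) *
            (∫ x, |u (φ (k+1)) x| ^ p ∂μ) ^ (2 / p) ≤ A k ^ t * B ^ (2 / p) := by
        apply mul_le_mul_of_nonneg_left h4
        exact Real.rpow_nonneg (hA0 k) _
      have h6 : C * ((∫ x, |(st k).2.1 x| ^ p ∂μ) ^ ((p - 2) / p) *
            (∫ x, |u (φ (k+1)) x| ^ p ∂μ) ^ (2 / p) + ∫ x, |u (φ (k+1)) x| ^ p ∂μ) ≤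
          C * (A k ^ t * B ^ (2 / p) + B) := by
        apply mul_le_mul_of_nonneg_left _ hC0.le
        have := hB (φ (k+1))
        linarith
      calc ∫ x, |(st k).2.1 x + u (φ (k+1)) x| ^ p ∂μ
          ≤ (∫ x, |(st k).2.1 x| ^ p ∂μ) + p + C *
            ((∫ x, |(st k).2.1 x| ^ p ∂μ) ^ ((p - 2) / p) *
              (∫ x, |u (φ (k+1)) x| ^ p ∂μ) ^ (2 / p)
              + ∫ x, |u (φ (k+1)) x| ^ p ∂μ) := h2
        _ ≤ A k + E + F * A k ^ t := by
            rw [hA]; dsimp only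
            have h7 := h6
            rw [hF]
            nlinarith [h6]
    -- choose D
    set D := max B (max (2 * E) ((2 * F) ^ (p / 2))) with hD
    have hDB : B ≤ D := le_max_left _ _
    have hD0 : 0 < D := lt_of_lt_of_le hB0 hDB
    have hDE : 2 * E ≤ D := le_trans (le_max_left _ _) (le_max_right _ _)
    have hDF : (2 * F) ^ (p / 2) ≤ D := le_trans (le_max_right _ _) (le_max_right _ _)
    have hFD : F * D ^ t ≤ D / 2 := by
      have h2F : 2 * F ≤ D ^ (2 / p) := by
        have e : ((2 * F) ^ (p / 2)) ^ (2 / p) = 2 * F := by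
          rw [← Real.rpow_mul (by positivity)]
          rw [show p / 2 * (2 / p) = 1 by field_simp]
          exact Real.rpow_one _
        calc 2 * F = ((2 * F) ^ (p / 2)) ^ (2 / p) := e.symm
          _ ≤ D ^ (2 / p) := Real.rpow_le_rpow (by positivity) hDF (by positivity)
      have h8 : 2 * F * D ^ t ≤ D ^ (2 / p) * D ^ t :=
        mul_le_mul_of_nonneg_right h2F (Real.rpow_nonneg hD0.le _)
      rw [← Real.rpow_add hD0, show 2 / p + t = 1 by linarith [ht1], Real.rpow_one] at h8
      linarith
    have hgrow : ∀ k, A k ≤ D * ((k : ℝ) + 1) ^ (p / 2) := by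
      intro k
      induction k with
      | zero =>
        have : ((0:ℕ):ℝ) + 1 = 1 := by norm_num
        rw [this, Real.one_rpow]
        linarith [hAzero, hDB]
      | succ k ih =>
        have hs1 : (1:ℝ) ≤ p / 2 := by linarith
        have hk1 : (1:ℝ) ≤ (k:ℝ) + 1 := by
          have : (0:ℝ) ≤ (k:ℝ) := Nat.cast_nonneg k
          linarith
        have hk1' : (0:ℝ) < (k:ℝ) + 1 := by linarith
        -- (k+2)^(p/2) ≥ (k+1)^(p/2) + (k+1)^(p/2-1)
        have hkey : ((k:ℝ) + 1) ^ (p / 2) + ((k:ℝ) + 1) ^ (p / 2 - 1) ≤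
            ((k:ℝ) + 2) ^ (p / 2) := by
          have e1 : ((k:ℝ) + 2) ^ (p / 2) = ((k:ℝ) + 2) ^ (p / 2 - 1) * ((k:ℝ) + 2) := by
            rw [← Real.rpow_add_one (by linarith : (k:ℝ) + 2 ≠ 0)]
            norm_num
          have e2 : ((k:ℝ) + 1) ^ (p / 2 - 1) * ((k:ℝ) + 2) ≤
              ((k:ℝ) + 2) ^ (p / 2 - 1) * ((k:ℝ) + 2) := by
            apply mul_le_mul_of_nonneg_right _ (by linarith)
            exact Real.rpow_le_rpow (by linarith) (by linarith) (by linarith)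
          have e3 : ((k:ℝ) + 1) ^ (p / 2 - 1) * ((k:ℝ) + 2) =
              ((k:ℝ) + 1) ^ (p / 2 - 1) * ((k:ℝ) + 1) + ((k:ℝ) + 1) ^ (p / 2 - 1) := by
            ring
          have e4 : ((k:ℝ) + 1) ^ (p / 2 - 1) * ((k:ℝ) + 1) = ((k:ℝ) + 1) ^ (p / 2) := by
            rw [← Real.rpow_add_one (by linarith : (k:ℝ) + 1 ≠ 0)]
            norm_num
          rw [e1]
          rw [e3, e4] at e2
          linarith
        have hone : (1:ℝ) ≤ ((k:ℝ) + 1) ^ (p / 2 - 1) :=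
          Real.one_le_rpow hk1 (by linarith)
        -- A k ^ t bound
        have hAt : A k ^ t ≤ D ^ t * ((k:ℝ) + 1) ^ (p / 2 - 1) := by
          have h9 : A k ^ t ≤ (D * ((k:ℝ) + 1) ^ (p / 2)) ^ t :=
            Real.rpow_le_rpow (hA0 k) ih ht0
          have h10 : (D * ((k:ℝ) + 1) ^ (p / 2)) ^ t =
              D ^ t * ((k:ℝ) + 1) ^ (p / 2 * t) := by
            rw [Real.mul_rpow hD0.le (Real.rpow_nonneg hk1'.le _),
              ← Real.rpow_mul hk1'.le]
          have h11 : p / 2 * t = p / 2 - 1 := by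
            rw [ht]
            field_simp
          rw [h10, h11] at h9
          exact h9
        have hFA : F * A k ^ t ≤ (D / 2) * ((k:ℝ) + 1) ^ (p / 2 - 1) := by
          calc F * A k ^ t ≤ F * (D ^ t * ((k:ℝ) + 1) ^ (p / 2 - 1)) :=
                mul_le_mul_of_nonneg_left hAt hF0.le
            _ = (F * D ^ t) * ((k:ℝ) + 1) ^ (p / 2 - 1) := by ring
            _ ≤ (D / 2) * ((k:ℝ) + 1) ^ (p / 2 - 1) :=
                mul_le_mul_of_nonneg_right hFD (by positivity)
        have hEb : E ≤ (D / 2) * ((k:ℝ) + 1) ^ (p / 2 - 1) := by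
          calc E ≤ D / 2 := by linarith
            _ = (D / 2) * 1 := by ring
            _ ≤ (D / 2) * ((k:ℝ) + 1) ^ (p / 2 - 1) :=
                mul_le_mul_of_nonneg_left hone (by linarith)
        have hfin := hrec k
        have : A (k+1) ≤ D * ((k:ℝ) + 1) ^ (p / 2) + D * ((k:ℝ) + 1) ^ (p / 2 - 1) := by
          calc A (k+1) ≤ A k + E + F * A k ^ t := hfin
            _ ≤ D * ((k:ℝ) + 1) ^ (p / 2) + (D / 2) * ((k:ℝ) + 1) ^ (p / 2 - 1) +
                (D / 2) * ((k:ℝ) + 1) ^ (p / 2 - 1) := by linarith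
            _ = D * ((k:ℝ) + 1) ^ (p / 2) + D * ((k:ℝ) + 1) ^ (p / 2 - 1) := by ring
        have hcast : ((k+1:ℕ):ℝ) + 1 = (k:ℝ) + 2 := by push_cast; ring
        rw [hcast]
        calc A (k+1) ≤ D * ((k:ℝ) + 1) ^ (p / 2) + D * ((k:ℝ) + 1) ^ (p / 2 - 1) := this
          _ = D * (((k:ℝ) + 1) ^ (p / 2) + ((k:ℝ) + 1) ^ (p / 2 - 1)) := by ring
          _ ≤ D * ((k:ℝ) + 2) ^ (p / 2) := mul_le_mul_of_nonneg_left hkey hD0.le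
    exact hgoal D (p / 2) hD0 (by linarith) hgrow
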